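/- Let D ≥ 1 and let f : ℝ^n → ℝ be convex on the ball B_D = {y : ‖y‖₂ ≤ D}. Let x ∈ ℝ^n with ‖x‖₂ ≤ 1, let 0 ≤ δ ≤ 1, and let g be a δ-subgradient of f at x on B_D, i.e. f(y) + δ ≥ f(x) + ⟨g, y − x⟩ for all y ∈ B_D. Then: (1) if ‖g‖₂ ≤ ½√(δ/D), then f(x) ≤ min_{‖y‖₂ ≤ D} f(y) + 2√(δD); (2) if ‖g‖₂ > ½√(δ/D), then every y with ‖y‖₂ ≤ D and f(y) ≤ f(x) satisfies ⟨g/‖g‖₂, y⟩ ≤ ⟨g/‖g‖₂, x⟩ + 2√(δD). -/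

import Mathlib

open scoped RealInnerProductSpace

/-- From approximate subgradients to separation.  Let `f` be convex on the ball of radius
`D ≥ 1`, `‖x‖ ≤ 1`, `0 ≤ δ ≤ 1`, and let `g` be a `δ`-subgradient of `f` at `x` on the
ball.  Then: (1) if `‖g‖ ≤ ½√(δ/D)`, `x` is a `2√(δD)`-approximate minimizer of `f` over
the ball; (2) otherwise the normalized halfspace
`⟨g/‖g‖, y⟩ ≤ ⟨g/‖g‖, x⟩ + 2√(δD)` contains every `y` in the ball with `f(y) ≤ f(x)`. -/
theorem stmt11 (n : ℕ) (D : ℝ) (hD : 1 ≤ D)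
    (f : EuclideanSpace ℝ (Fin n) → ℝ)
    (hf : ConvexOn ℝ (Metric.closedBall (0 : EuclideanSpace ℝ (Fin n)) D) f)
    (x : EuclideanSpace ℝ (Fin n)) (hx : ‖x‖ ≤ 1)
    (δ : ℝ) (hδ0 : 0 ≤ δ) (hδ1 : δ ≤ 1)
    (g : EuclideanSpace ℝ (Fin n))
    (hg : ∀ y : EuclideanSpace ℝ (Fin n), ‖y‖ ≤ D → f x + ⟪g, y - x⟫ ≤ f y + δ) :
    (‖g‖ ≤ (1 / 2) * Real.sqrt (δ / D) →
      ∀ y : EuclideanSpace ℝ (Fin n), ‖y‖ ≤ D → f x ≤ f y + 2 * Real.sqrt (δ * D)) ∧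
    ((1 / 2) * Real.sqrt (δ / D) < ‖g‖ →
      ∀ y : EuclideanSpace ℝ (Fin n), ‖y‖ ≤ D → f y ≤ f x →
        ⟪(1 / ‖g‖) • g, y⟫ ≤ ⟪(1 / ‖g‖) • g, x⟫ + 2 * Real.sqrt (δ * D)) := by
  have hD0 : (0:ℝ) < D := lt_of_lt_of_le one_pos hD
  have hst : Real.sqrt (δ / D) * D = Real.sqrt (δ * D) := by
    rw [show δ * D = (δ / D) * D ^ 2 by field_simp,
      Real.sqrt_mul (by positivity), Real.sqrt_sq hD0.le]
  have hδt : δ ≤ Real.sqrt (δ * D) := by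
    have h := Real.sqrt_le_sqrt (show δ * δ ≤ δ * D by nlinarith)
    rwa [Real.sqrt_mul_self hδ0] at h
  constructor
  · intro hgsmall y hy
    have h1 := hg y hy
    have h2 : -⟪g, y - x⟫ ≤ ‖g‖ * ‖y - x‖ := by
      calc -⟪g, y - x⟫ ≤ |⟪g, y - x⟫| := neg_le_abs _
        _ ≤ ‖g‖ * ‖y - x‖ := abs_real_inner_le_norm _ _
    have h3 : ‖y - x‖ ≤ D + 1 := le_trans (norm_sub_le _ _) (by linarith)
    have h4 : ‖g‖ * ‖y - x‖ ≤ (1 / 2) * Real.sqrt (δ / D) * (D + 1) :=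
      mul_le_mul hgsmall h3 (norm_nonneg _) (by positivity)
    have h5 : (1 / 2) * Real.sqrt (δ / D) * (D + 1) ≤ Real.sqrt (δ * D) := by
      nlinarith [Real.sqrt_nonneg (δ / D)]
    linarith
  · intro hgbig y hy hfy
    have hgpos : 0 < ‖g‖ := lt_of_le_of_lt (by positivity) hgbig
    have h1 := hg y hy
    have h2 : ⟪g, y⟫ - ⟪g, x⟫ ≤ δ := by
      have : ⟪g, y - x⟫ ≤ δ := by linarith
      rwa [inner_sub_right] at this
    have key : δ ≤ 2 * Real.sqrt (δ * D) * ‖g‖ := by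
      have h5 : Real.sqrt (δ * D) * Real.sqrt (δ / D) = δ := by
        rw [← Real.sqrt_mul (by positivity),
          show δ * D * (δ / D) = δ ^ 2 by field_simp, Real.sqrt_sq hδ0]
      nlinarith [Real.sqrt_nonneg (δ * D), Real.sqrt_nonneg (δ / D)]
    rw [real_inner_smul_left, real_inner_smul_left]
    have hne : ‖g‖ ≠ 0 := hgpos.ne'
    rw [div_mul_eq_mul_div, div_mul_eq_mul_div, one_mul, one_mul,
      div_le_iff₀ hgpos, add_mul, div_mul_cancel₀ _ hne]
    nlinarith
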